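/- Let M be a square matrix over ℂ with operator norm ‖M‖ ≤ 1, and suppose ‖e^{Mt}‖ ≤ Δ for all t ≥ 0 for some Δ ≥ 1. Let k, m be positive integers with (2/(k+1)!) · m · Δ · (Δ+1) ≤ 1, and let T_k(M) = ∑_{j=0}^{k} M^j/j! be the truncated Taylor series. Then for every l with 0 ≤ l ≤ m, ‖e^{Ml} − T_k(M)^l‖ ≤ 2·l·Δ·(Δ+1)/(k+1)!. -/

import Mathlib

open NormedSpace

set_option maxHeartbeats 1000000 in
private lemma exp_taylor_tail_bound {N : ℕ}
    (M : EuclideanSpace ℂ (Fin N) →L[ℂ] EuclideanSpace ℂ (Fin N))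
    (hM : ‖M‖ ≤ 1) (k : ℕ) (hk : 0 < k) :
    ‖NormedSpace.exp M - (∑ j ∈ Finset.range (k + 1), (1 / (Nat.factorial j) : ℂ) • M ^ j)‖
      ≤ 2 / (Nat.factorial (k + 1)) := by
  set f : ℕ → (EuclideanSpace ℂ (Fin N) →L[ℂ] EuclideanSpace ℂ (Fin N)) :=
    fun n => ((Nat.factorial n : ℂ))⁻¹ • M ^ n with hf
  have hsum : Summable f := expSeries_summable' (𝕂 := ℂ) M
  have hT : (∑ j ∈ Finset.range (k + 1), (1 / (Nat.factorial j) : ℂ) • M ^ j)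
      = ∑ j ∈ Finset.range (k + 1), f j := by
    simp [hf, one_div]
  have hE : NormedSpace.exp M = ∑' n, f n := by rw [exp_eq_tsum ℂ]
  have key : NormedSpace.exp M - (∑ j ∈ Finset.range (k + 1), f j) = ∑' n, f (n + (k + 1)) := by
    rw [hE, ← Summable.sum_add_tsum_nat_add (k + 1) hsum]
    abel
  rw [hT, key]
  have hnsum : Summable fun n => ‖f (n + (k + 1))‖ :=
    (summable_nat_add_iff (k+1)).2 (norm_expSeries_summable' (𝕂 := ℂ) M)
  have hb : ∀ n : ℕ, ‖f (n + (k + 1))‖ ≤ (1 / (Nat.factorial (k+1)) : ℝ) * (1/2) ^ n := by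
    intro n
    have h1 : ‖f (n + (k + 1))‖ ≤ ((Nat.factorial (n + (k+1)) : ℝ))⁻¹ := by
      show ‖((Nat.factorial (n + (k+1)) : ℂ))⁻¹ • M ^ (n + (k+1))‖ ≤ _
      rw [norm_smul ((Nat.factorial (n + (k+1)) : ℂ))⁻¹ (M ^ (n + (k+1))), norm_inv,
        Complex.norm_natCast]
      calc ((Nat.factorial (n + (k+1)) : ℝ))⁻¹ * ‖M ^ (n + (k+1))‖
          ≤ ((Nat.factorial (n + (k+1)) : ℝ))⁻¹ * 1 := by
            gcongr
            calc ‖M ^ (n + (k+1))‖ ≤ ‖M‖ ^ (n + (k+1)) := norm_pow_le' _ (by positivity)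
              _ ≤ 1 ^ (n + (k+1)) := by gcongr
              _ = 1 := one_pow _
        _ = _ := mul_one _
    refine h1.trans ?_
    have h2 : ((Nat.factorial (k+1)) * 2 ^ n : ℝ) ≤ (Nat.factorial (n + (k+1)) : ℝ) := by
      have : Nat.factorial (k+1) * 2 ^ n ≤ Nat.factorial (n + (k+1)) := by
        calc Nat.factorial (k+1) * 2 ^ n ≤ Nat.factorial (k+1) * (k+2) ^ n := by
              gcongr
              omega
          _ ≤ Nat.factorial (k + 1 + n) := Nat.factorial_mul_pow_le_factorial
          _ = Nat.factorial (n + (k+1)) := by rw [Nat.add_comm]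
      exact_mod_cast this
    have h3 : ((Nat.factorial (n + (k+1)) : ℝ))⁻¹ ≤ ((Nat.factorial (k+1)) * 2 ^ n : ℝ)⁻¹ := by
      gcongr
    refine h3.trans_eq ?_
    rw [mul_inv, one_div, div_pow, one_pow, one_div]
  have hgsum : Summable fun n : ℕ => (1 / (Nat.factorial (k+1)) : ℝ) * (1/2) ^ n :=
    (summable_geometric_of_lt_one (by norm_num) (by norm_num)).mul_left _
  calc ‖∑' n, f (n + (k + 1))‖ ≤ ∑' n, ((1 / (Nat.factorial (k+1)) : ℝ) * (1/2) ^ n) :=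
        (norm_tsum_le_tsum_norm hnsum).trans (Summable.tsum_le_tsum hb hnsum hgsum)
    _ = (1 / (Nat.factorial (k+1)) : ℝ) * 2 := by
        rw [tsum_mul_left, tsum_geometric_of_lt_one (by norm_num) (by norm_num)]
        norm_num
    _ = 2 / (Nat.factorial (k + 1)) := by ring

/-- Let `M` be an operator with `‖M‖ ≤ 1` and `‖e^{Mt}‖ ≤ Δ` for all `t ≥ 0`, with `Δ ≥ 1`.
If `k, m` are positive integers with `2 m Δ (Δ+1)/(k+1)! ≤ 1` and
`T_k(M) = ∑_{j=0}^{k} M^j/j!`, then for every `0 ≤ l ≤ m`,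
`‖e^{Ml} − T_k(M)^l‖ ≤ 2 l Δ (Δ+1)/(k+1)!`. -/
theorem exp_taylor_power_error {N : ℕ}
    (M : EuclideanSpace ℂ (Fin N) →L[ℂ] EuclideanSpace ℂ (Fin N))
    (hM : ‖M‖ ≤ 1) (Δ : ℝ) (hΔ : 1 ≤ Δ)
    (hexp : ∀ t : ℝ, 0 ≤ t → ‖NormedSpace.exp (t • M)‖ ≤ Δ)
    (k m : ℕ) (hk : 0 < k) (hm : 0 < m)
    (hcond : 2 / (Nat.factorial (k + 1)) * m * Δ * (Δ + 1) ≤ 1) :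
    ∀ l : ℕ, l ≤ m →
      ‖NormedSpace.exp ((l : ℝ) • M) - (∑ j ∈ Finset.range (k + 1), (1 / (Nat.factorial j) : ℂ) • M ^ j) ^ l‖
        ≤ 2 * l * Δ * (Δ + 1) / (Nat.factorial (k + 1)) := by
  set E := NormedSpace.exp M with hEdef
  set T := ∑ j ∈ Finset.range (k + 1), (1 / (Nat.factorial j) : ℂ) • M ^ j with hTdef
  have hΔ0 : (0:ℝ) ≤ Δ := le_trans zero_le_one hΔ
  have hfact : (0:ℝ) < (Nat.factorial (k+1) : ℝ) := by
    exact_mod_cast Nat.factorial_pos (k+1)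
  have hδ : ‖E - T‖ ≤ 2 / (Nat.factorial (k + 1)) := exp_taylor_tail_bound M hM k hk
  have hexppow : ∀ i : ℕ, NormedSpace.exp ((i : ℝ) • M) = E ^ i := by
    intro i
    have h : (i : ℝ) • M = (i : ℕ) • M := by
      ext x
      simp [Nat.cast_smul_eq_nsmul]
    letI : NormedAlgebra ℚ (EuclideanSpace ℂ (Fin N) →L[ℂ] EuclideanSpace ℂ (Fin N)) :=
      NormedAlgebra.restrictScalars ℚ ℂ _
    rw [h, exp_nsmul]
  have hEpow : ∀ i : ℕ, ‖E ^ i‖ ≤ Δ := by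
    intro i
    rw [← hexppow i]
    exact hexp i (by positivity)
  have hcomm : Commute E T := by
    refine Commute.sum_right _ _ _ fun j _ => ?_
    exact (((Commute.refl M).exp_left).pow_right j).smul_right _
  intro l
  induction l using Nat.strong_induction_on with
  | _ l IH =>
    intro hl
    rw [hexppow l]
    have hTpow : ∀ i, i < l → ‖T ^ i‖ ≤ Δ + 1 := by
      intro i hi
      have h1 := IH i hi (le_trans hi.le hl)
      rw [hexppow i] at h1
      have h2 : 2 * (i:ℝ) * Δ * (Δ + 1) / (Nat.factorial (k+1)) ≤ 1 := by
        have him : (i : ℝ) ≤ m := by exact_mod_cast le_trans hi.le hl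
        calc 2 * (i:ℝ) * Δ * (Δ + 1) / (Nat.factorial (k+1))
            = 2 / (Nat.factorial (k+1)) * i * Δ * (Δ + 1) := by ring
          _ ≤ 2 / (Nat.factorial (k+1)) * m * Δ * (Δ + 1) := by
              gcongr
          _ ≤ 1 := hcond
      calc ‖T ^ i‖ = ‖E ^ i - (E ^ i - T ^ i)‖ := by rw [sub_sub_cancel]
        _ ≤ ‖E ^ i‖ + ‖E ^ i - T ^ i‖ := norm_sub_le _ _
        _ ≤ Δ + 1 := add_le_add (hEpow i) (h1.trans h2)
    have hgeom : (∑ i ∈ Finset.range l, E ^ i * T ^ (l - 1 - i)) * (E - T) = E ^ l - T ^ l :=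
      hcomm.geom_sum₂_mul l
    calc ‖E ^ l - T ^ l‖
        = ‖(∑ i ∈ Finset.range l, E ^ i * T ^ (l - 1 - i)) * (E - T)‖ := by rw [hgeom]
      _ ≤ ‖∑ i ∈ Finset.range l, E ^ i * T ^ (l - 1 - i)‖ * ‖E - T‖ := norm_mul_le _ _
      _ ≤ ((l : ℝ) * (Δ * (Δ + 1))) * (2 / (Nat.factorial (k+1))) := by
          refine mul_le_mul ?_ hδ (norm_nonneg _) (by positivity)
          calc ‖∑ i ∈ Finset.range l, E ^ i * T ^ (l - 1 - i)‖
              ≤ ∑ i ∈ Finset.range l, ‖E ^ i * T ^ (l - 1 - i)‖ := norm_sum_le _ _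
            _ ≤ ∑ _i ∈ Finset.range l, Δ * (Δ + 1) := by
                refine Finset.sum_le_sum fun i hi => ?_
                have hil : i < l := Finset.mem_range.mp hi
                have hlt : l - 1 - i < l := by omega
                exact (norm_mul_le _ _).trans
                  (mul_le_mul (hEpow i) (hTpow _ hlt) (norm_nonneg _) hΔ0)
            _ = (l : ℝ) * (Δ * (Δ + 1)) := by
                rw [Finset.sum_const, Finset.card_range, nsmul_eq_mul]
      _ = 2 * l * Δ * (Δ + 1) / (Nat.factorial (k + 1)) := by ring
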